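/- arXiv:2310.20165 — 2 statements merged into one kernel-verified Lean document; each statement's English description precedes it below -/
import Mathlib

section
/- Let (P_{n,i}) be a triangular array of item response functions satisfying Conditions (D) and (T), and fix 0 < α < β < 1. Then there exist constants C̃_{αβ,1} > 0 and C̃_{αβ,2} > 0, independent of (n,i), and δ₀ > 0, such that for every δ ∈ (0, δ₀), all sufficiently large n, all i ∈ {1,…,n}, and every integer k for which there exists θ_k ∈ (α,β) with Σ_{j≠i} P_{n,j}(θ_k) = k, one has (∫_{(0,δ)∪(1−δ,1)} Q_{n,i,k}(θ) dθ) / (∫₀¹ Q_{n,i,k}(θ) dθ) ≤ n·δ·exp(−n·C̃_{αβ,1}) / C̃_{αβ,2}, where Q_{n,i,k}(θ) = Σ_{S ⊆ {1,…,n}∖{i}, |S| = k} ∏_{j∈S} P_{n,j}(θ) · ∏_{j∉S, j≠i} (1 − P_{n,j}(θ)). The left-hand side equals the conditional probability that the uniform latent trait Θ lies outside (δ, 1−δ) given that exactly k of the n−1 responses other than item i equal 1. -/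
open Set Filter Topology MeasureTheory

/-- A triangular array of item response functions: for `n ≥ 1` and `1 ≤ i ≤ n`,
`P n i : (0,1) → [0,1]`. -/
def TriIRF (P : ℕ → ℕ → ℝ → ℝ) : Prop :=
  ∀ n i, 1 ≤ i → i ≤ n → ∀ θ ∈ Set.Ioo (0 : ℝ) 1, P n i θ ∈ Set.Icc (0 : ℝ) 1

/-- Condition (D): each `P n i` is continuously differentiable on `(0,1)` with derivative
`P' n i`, and for every `0 < α < β < 1` the derivatives are uniformly (in `(n,i)`)
bounded away from `0` and `∞` on `[α,β]`. -/
def CondD (P P' : ℕ → ℕ → ℝ → ℝ) : Prop :=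
  (∀ n i, 1 ≤ i → i ≤ n →
      (∀ θ ∈ Set.Ioo (0 : ℝ) 1, HasDerivAt (P n i) (P' n i θ) θ) ∧
      ContinuousOn (P' n i) (Set.Ioo (0 : ℝ) 1)) ∧
  (∀ α β : ℝ, 0 < α → α < β → β < 1 →
    ∃ m M : ℝ, 0 < m ∧ m < M ∧
      ∀ n i, 1 ≤ i → i ≤ n → ∀ θ ∈ Set.Icc α β,
        m < P' n i θ ∧ P' n i θ < M)

/-- Condition (T): `P n i` takes values in `[κ n i, γ n i]` with `0 ≤ κ n i < γ n i ≤ 1`,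
and the IRFs approach their lower/upper limits uniformly in `(n,i)` near `0` and `1`. -/
def CondT (P : ℕ → ℕ → ℝ → ℝ) (κ γ : ℕ → ℕ → ℝ) : Prop :=
  (∀ n i, 1 ≤ i → i ≤ n →
      0 ≤ κ n i ∧ κ n i < γ n i ∧ γ n i ≤ 1 ∧
      ∀ θ ∈ Set.Ioo (0 : ℝ) 1, P n i θ ∈ Set.Icc (κ n i) (γ n i)) ∧
  (∀ ε : ℝ, 0 < ε →
    ∃ l u : ℝ, l ∈ Set.Ioo (0 : ℝ) 1 ∧ u ∈ Set.Ioo (0 : ℝ) 1 ∧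
      ∀ n i, 1 ≤ i → i ≤ n →
        (∀ θ ∈ Set.Ioc (0 : ℝ) l, P n i θ - κ n i ≤ ε) ∧
        (∀ θ ∈ Set.Ico u (1 : ℝ), γ n i - P n i θ ≤ ε))


/-- `Qfun P n i k θ` : the Poisson-binomial probability that, given latent value `θ`,
exactly `k` of the `n − 1` conditionally independent Bernoulli responses with success
probabilities `P n j θ` for `j ∈ {1,…,n} \ {i}` equal `1`. -/
def Qfun (P : ℕ → ℕ → ℝ → ℝ) (n i k : ℕ) (θ : ℝ) : ℝ :=
  ∑ S ∈ ((Finset.Icc 1 n).erase i).powersetCard k,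
    (∏ j ∈ S, P n j θ) * ∏ j ∈ ((Finset.Icc 1 n).erase i) \ S, (1 - P n j θ)

namespace CTPB

/-- product term of a Poisson-binomial expansion -/
def trm (p : ℕ → ℝ) (F S : Finset ℕ) : ℝ := (∏ j ∈ S, p j) * ∏ j ∈ F \ S, (1 - p j)

/-- probability of exactly `k` successes -/
def lay (p : ℕ → ℝ) (F : Finset ℕ) (k : ℕ) : ℝ := ∑ S ∈ F.powersetCard k, trm p F S

/-- probability of at most `k` successes -/
def cdf (p : ℕ → ℝ) (F : Finset ℕ) (k : ℕ) : ℝ :=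
  ∑ S ∈ F.powerset.filter (fun S => S.card ≤ k), trm p F S

/-- probability of fewer than `k` successes -/
def cdfLT (p : ℕ → ℝ) (F : Finset ℕ) (k : ℕ) : ℝ :=
  ∑ S ∈ F.powerset.filter (fun S => S.card < k), trm p F S

lemma trm_nonneg {p : ℕ → ℝ} {F S : Finset ℕ} (hp : ∀ j ∈ F, 0 ≤ p j ∧ p j ≤ 1)
    (hS : S ⊆ F) : 0 ≤ trm p F S := by
  unfold trm
  apply mul_nonneg
  · exact Finset.prod_nonneg fun j hj => (hp j (hS hj)).1
  · exact Finset.prod_nonneg fun j hj => by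
      have := (hp j (Finset.mem_sdiff.mp hj).1).2; linarith

lemma sum_powerset_trm (p : ℕ → ℝ) (F : Finset ℕ) : ∑ S ∈ F.powerset, trm p F S = 1 := by
  unfold trm
  rw [← Finset.prod_add]
  exact Finset.prod_eq_one fun j _ => by ring

lemma exp_aux {t : ℝ} (ht : 0 ≤ t) : Real.exp t - 1 - t ≤ t / 2 * (Real.exp t - 1) := by
  set f : ℝ → ℝ := fun x => x / 2 * (Real.exp x - 1) - (Real.exp x - 1 - x) with hf
  have hderiv : ∀ x : ℝ, HasDerivAt f ((x - 1) * Real.exp x / 2 + 1 / 2) x := by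
    intro x
    have h1 : HasDerivAt (fun x : ℝ => x / 2 * (Real.exp x - 1))
        ((1 / 2) * (Real.exp x - 1) + x / 2 * Real.exp x) x := by
      have := ((hasDerivAt_id x).div_const 2).mul ((Real.hasDerivAt_exp x).sub_const 1)
      exact this
    have h2 : HasDerivAt (fun x : ℝ => Real.exp x - 1 - x) (Real.exp x - 1) x := by
      have := ((Real.hasDerivAt_exp x).sub_const 1).sub (hasDerivAt_id x)
      exact this
    have h3 : HasDerivAt f (1 / 2 * (Real.exp x - 1) + x / 2 * Real.exp x - (Real.exp x - 1)) x :=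
      h1.sub h2
    convert h3 using 1
    ring
  have hmono : MonotoneOn f (Set.Ici (0:ℝ)) := by
    apply monotoneOn_of_deriv_nonneg (convex_Ici 0)
    · exact fun x _ => (hderiv x).differentiableAt.continuousAt.continuousWithinAt
    · exact fun x _ => (hderiv x).differentiableAt.differentiableWithinAt
    · intro x _
      rw [(hderiv x).deriv]
      have h3 : (1 : ℝ) - x ≤ Real.exp (-x) := by
        have := Real.add_one_le_exp (-x); linarith
      have h4 : (1 - x) * Real.exp x ≤ 1 := by
        have h5 := mul_le_mul_of_nonneg_right h3 (Real.exp_pos x).le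
        rwa [← Real.exp_add, neg_add_cancel, Real.exp_zero] at h5
      nlinarith
  have h0 : f 0 = 0 := by simp [hf]
  have hft := hmono Set.self_mem_Ici (Set.mem_Ici.mpr ht) ht
  rw [h0] at hft
  simp only [hf] at hft
  linarith

/-- Chernoff-type bound for upper-tail collections of subsets. -/
lemma cher (F : Finset ℕ) (p : ℕ → ℝ) (hp : ∀ j ∈ F, 0 ≤ p j ∧ p j ≤ 1)
    (k : ℕ) (hk : (k : ℝ) ≤ F.card) (c : ℝ) (hc : 0 < c)
    (hμ : ∑ j ∈ F, p j ≤ (k : ℝ) - F.card * c)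
    (A : Finset (Finset ℕ)) (hA : A ⊆ F.powerset) (hAc : ∀ S ∈ A, k ≤ S.card) :
    ∑ S ∈ A, trm p F S ≤ Real.exp (-(3 / 4) * c * (Real.exp (c / 2) - 1) * F.card) := by
  set t := c / 2 with htdef
  have ht : 0 < t := by positivity
  have het : (1:ℝ) ≤ Real.exp t := Real.one_le_exp ht.le
  have h1 : ∀ S ∈ A, trm p F S ≤
      Real.exp (-(t * k)) * ((∏ j ∈ S, p j * Real.exp t) * ∏ j ∈ F \ S, (1 - p j)) := by
    intro S hSA
    have hS : S ⊆ F := Finset.mem_powerset.mp (hA hSA)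
    have h0 : 0 ≤ trm p F S := trm_nonneg hp hS
    have hcard : (k : ℝ) ≤ S.card := by exact_mod_cast hAc S hSA
    have hprod : (∏ j ∈ S, p j * Real.exp t) = (∏ j ∈ S, p j) * Real.exp t ^ S.card := by
      rw [Finset.prod_mul_distrib, Finset.prod_const]
    have hpow : Real.exp t ^ S.card = Real.exp ((S.card : ℝ) * t) := (Real.exp_nat_mul t S.card).symm
    have hge : 1 ≤ Real.exp (-(t * k)) * Real.exp ((S.card : ℝ) * t) := by
      rw [← Real.exp_add]
      apply Real.one_le_exp
      nlinarith
    calc trm p F S = 1 * trm p F S := (one_mul _).symm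
      _ ≤ (Real.exp (-(t * k)) * Real.exp ((S.card : ℝ) * t)) * trm p F S :=
          mul_le_mul_of_nonneg_right hge h0
      _ = Real.exp (-(t * k)) * ((∏ j ∈ S, p j * Real.exp t) * ∏ j ∈ F \ S, (1 - p j)) := by
          rw [hprod, hpow]; unfold trm; ring
  have hterm_nonneg : ∀ S ∈ F.powerset,
      0 ≤ (∏ j ∈ S, p j * Real.exp t) * ∏ j ∈ F \ S, (1 - p j) := by
    intro S hS
    have hSF : S ⊆ F := Finset.mem_powerset.mp hS
    apply mul_nonneg
    · exact Finset.prod_nonneg fun j hj => mul_nonneg (hp j (hSF hj)).1 (Real.exp_pos t).le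
    · exact Finset.prod_nonneg fun j hj => by
        have := (hp j (Finset.mem_sdiff.mp hj).1).2; linarith
  have h2 : ∑ S ∈ A, trm p F S ≤ Real.exp (-(t * k)) *
      ∑ S ∈ F.powerset, (∏ j ∈ S, p j * Real.exp t) * ∏ j ∈ F \ S, (1 - p j) := by
    calc ∑ S ∈ A, trm p F S
        ≤ ∑ S ∈ A, Real.exp (-(t * k)) * ((∏ j ∈ S, p j * Real.exp t) * ∏ j ∈ F \ S, (1 - p j)) :=
          Finset.sum_le_sum h1
      _ ≤ ∑ S ∈ F.powerset,
            Real.exp (-(t * k)) * ((∏ j ∈ S, p j * Real.exp t) * ∏ j ∈ F \ S, (1 - p j)) :=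
          Finset.sum_le_sum_of_subset_of_nonneg hA
            (fun S hS _ => mul_nonneg (Real.exp_pos _).le (hterm_nonneg S hS))
      _ = _ := by rw [← Finset.mul_sum]
  have h3 : ∑ S ∈ F.powerset, (∏ j ∈ S, p j * Real.exp t) * ∏ j ∈ F \ S, (1 - p j)
      = ∏ j ∈ F, (p j * Real.exp t + (1 - p j)) := (Finset.prod_add _ _ _).symm
  have h4 : ∏ j ∈ F, (p j * Real.exp t + (1 - p j))
      ≤ Real.exp ((Real.exp t - 1) * ∑ j ∈ F, p j) := by
    have hrw : Real.exp ((Real.exp t - 1) * ∑ j ∈ F, p j)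
        = ∏ j ∈ F, Real.exp ((Real.exp t - 1) * p j) := by
      rw [← Real.exp_sum, Finset.mul_sum]
    rw [hrw]
    apply Finset.prod_le_prod
    · intro j hj; nlinarith [(hp j hj).1, (hp j hj).2]
    · intro j hj
      have := Real.add_one_le_exp ((Real.exp t - 1) * p j)
      nlinarith [(hp j hj).1]
  have h5 : Real.exp ((Real.exp t - 1) * ∑ j ∈ F, p j)
      ≤ Real.exp ((Real.exp t - 1) * ((k:ℝ) - F.card * c)) :=
    Real.exp_le_exp.mpr (mul_le_mul_of_nonneg_left hμ (by linarith))
  have key : Real.exp (-(t * k)) * Real.exp ((Real.exp t - 1) * ((k:ℝ) - F.card * c))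
      ≤ Real.exp (-(3/4) * c * (Real.exp t - 1) * F.card) := by
    rw [← Real.exp_add]
    apply Real.exp_le_exp.mpr
    have haux := exp_aux ht.le
    have hk0 : (0:ℝ) ≤ k := Nat.cast_nonneg k
    have hX : (0:ℝ) ≤ Real.exp t - 1 := by linarith
    have hsplit : (k:ℝ) * (Real.exp t - 1 - t) ≤ (F.card:ℝ) * (t / 2 * (Real.exp t - 1)) := by
      calc (k:ℝ) * (Real.exp t - 1 - t) ≤ (k:ℝ) * (t / 2 * (Real.exp t - 1)) :=
            mul_le_mul_of_nonneg_left haux hk0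
        _ ≤ (F.card:ℝ) * (t / 2 * (Real.exp t - 1)) :=
            mul_le_mul_of_nonneg_right hk (by positivity)
    rw [htdef] at hsplit ⊢
    nlinarith [hsplit]
  calc ∑ S ∈ A, trm p F S
      ≤ Real.exp (-(t * k)) *
        ∑ S ∈ F.powerset, (∏ j ∈ S, p j * Real.exp t) * ∏ j ∈ F \ S, (1 - p j) := h2
    _ = Real.exp (-(t * k)) * ∏ j ∈ F, (p j * Real.exp t + (1 - p j)) := by rw [h3]
    _ ≤ Real.exp (-(t * k)) * Real.exp ((Real.exp t - 1) * ∑ j ∈ F, p j) :=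
        mul_le_mul_of_nonneg_left h4 (Real.exp_pos _).le
    _ ≤ Real.exp (-(t * k)) * Real.exp ((Real.exp t - 1) * ((k:ℝ) - F.card * c)) :=
        mul_le_mul_of_nonneg_left h5 (Real.exp_pos _).le
    _ ≤ Real.exp (-(3/4) * c * (Real.exp t - 1) * F.card) := key


-- complement value identity
lemma trm_compl (p : ℕ → ℝ) {F S : Finset ℕ} (hS : S ⊆ F) :
    trm p F S = trm (fun j => 1 - p j) F (F \ S) := by
  unfold trm
  rw [Finset.sdiff_sdiff_eq_self hS]
  rw [mul_comm]
  congr 1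
  exact Finset.prod_congr rfl fun j _ => by ring

lemma lay_compl (p : ℕ → ℝ) (F : Finset ℕ) (k : ℕ) (hk : k ≤ F.card) :
    lay p F k = ∑ S ∈ F.powersetCard (F.card - k), trm (fun j => 1 - p j) F S := by
  unfold lay
  refine Finset.sum_nbij' (fun S => F \ S) (fun S => F \ S) ?_ ?_ ?_ ?_ ?_
  · intro S hS
    rw [Finset.mem_powersetCard] at hS ⊢
    exact ⟨Finset.sdiff_subset, by rw [Finset.card_sdiff_of_subset hS.1, hS.2]⟩
  · intro S hS
    rw [Finset.mem_powersetCard] at hS ⊢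
    refine ⟨Finset.sdiff_subset, ?_⟩
    rw [Finset.card_sdiff_of_subset hS.1, hS.2]
    omega
  · intro S hS
    exact Finset.sdiff_sdiff_eq_self (Finset.mem_powersetCard.mp hS).1
  · intro S hS
    exact Finset.sdiff_sdiff_eq_self (Finset.mem_powersetCard.mp hS).1
  · intro S hS
    exact trm_compl p (Finset.mem_powersetCard.mp hS).1

lemma cdf_compl (p : ℕ → ℝ) (F : Finset ℕ) (k : ℕ) :
    cdf p F k = ∑ S ∈ F.powerset.filter (fun S => F.card - k ≤ S.card),
      trm (fun j => 1 - p j) F S := by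
  unfold cdf
  refine Finset.sum_nbij' (fun S => F \ S) (fun S => F \ S) ?_ ?_ ?_ ?_ ?_
  · intro S hS
    rw [Finset.mem_filter, Finset.mem_powerset] at hS ⊢
    refine ⟨Finset.sdiff_subset, ?_⟩
    rw [Finset.card_sdiff_of_subset hS.1]
    have := Finset.card_le_card hS.1
    omega
  · intro S hS
    rw [Finset.mem_filter, Finset.mem_powerset] at hS ⊢
    refine ⟨Finset.sdiff_subset, ?_⟩
    rw [Finset.card_sdiff_of_subset hS.1]
    have := Finset.card_le_card hS.1
    omega
  · intro S hS
    exact Finset.sdiff_sdiff_eq_self (Finset.mem_powerset.mp (Finset.mem_filter.mp hS).1)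
  · intro S hS
    exact Finset.sdiff_sdiff_eq_self (Finset.mem_powerset.mp (Finset.mem_filter.mp hS).1)
  · intro S hS
    exact trm_compl p (Finset.mem_powerset.mp (Finset.mem_filter.mp hS).1)

lemma cdf_split (p : ℕ → ℝ) (F : Finset ℕ) (k : ℕ) :
    cdf p F k = cdfLT p F k + lay p F k := by
  unfold cdf cdfLT lay
  rw [← Finset.sum_filter_add_sum_filter_not (F.powerset.filter (fun S => S.card ≤ k))
    (fun S => S.card < k)]
  congr 1
  · rw [Finset.filter_filter]
    exact Finset.sum_congr (Finset.filter_congr fun S _ => by constructor <;> (intro h; omega)) fun _ _ => rfl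
  · rw [Finset.filter_filter, Finset.powersetCard_eq_filter]
    exact Finset.sum_congr (Finset.filter_congr fun S _ => by constructor <;> (intro h; omega)) fun _ _ => rfl

lemma cdf_partition (p : ℕ → ℝ) (F : Finset ℕ) (k : ℕ) :
    cdf p F k + ∑ S ∈ F.powerset.filter (fun S => ¬ S.card ≤ k), trm p F S = 1 := by
  unfold cdf
  rw [Finset.sum_filter_add_sum_filter_not]
  exact sum_powerset_trm p F

lemma lay_nonneg {p : ℕ → ℝ} {F : Finset ℕ} (hp : ∀ j ∈ F, 0 ≤ p j ∧ p j ≤ 1) (k : ℕ) :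
    0 ≤ lay p F k :=
  Finset.sum_nonneg fun S hS => trm_nonneg hp (Finset.mem_powersetCard.mp hS).1

lemma lay_le_one {p : ℕ → ℝ} {F : Finset ℕ} (hp : ∀ j ∈ F, 0 ≤ p j ∧ p j ≤ 1) (k : ℕ) :
    lay p F k ≤ 1 := by
  rw [← sum_powerset_trm p F]
  apply Finset.sum_le_sum_of_subset_of_nonneg
  · intro S hS
    exact Finset.mem_powerset.mpr (Finset.mem_powersetCard.mp hS).1
  · intro S hS _
    exact trm_nonneg hp (Finset.mem_powerset.mp hS)

-- key anti-chain rule bound: (1 - p j) * lay on erased set ≤ lay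
lemma lay_erase_le {p : ℕ → ℝ} {F : Finset ℕ} (hp : ∀ j ∈ F, 0 ≤ p j ∧ p j ≤ 1)
    {j : ℕ} (hj : j ∈ F) (k : ℕ) :
    (1 - p j) * lay p (F.erase j) k ≤ lay p F k := by
  unfold lay
  rw [Finset.mul_sum]
  have hterm : ∀ S ∈ (F.erase j).powersetCard k, (1 - p j) * trm p (F.erase j) S = trm p F S := by
    intro S hS
    have hSsub : S ⊆ F.erase j := (Finset.mem_powersetCard.mp hS).1
    have hjS : j ∉ S := fun h => (Finset.mem_erase.mp (hSsub h)).1 rfl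
    have hjFS : j ∈ F \ S := Finset.mem_sdiff.mpr ⟨hj, hjS⟩
    have hFS : (F \ S).erase j = F.erase j \ S := by
      ext a
      simp only [Finset.mem_erase, Finset.mem_sdiff]
      tauto
    unfold trm
    rw [← Finset.mul_prod_erase _ _ hjFS, hFS]
    ring
  rw [Finset.sum_congr rfl hterm]
  apply Finset.sum_le_sum_of_subset_of_nonneg
  · exact Finset.powersetCard_mono (Finset.erase_subset j F)
  · intro S hS _
    exact trm_nonneg hp (Finset.mem_powersetCard.mp hS).1


lemma Xj_eq (p p' : ℕ → ℝ) (F : Finset ℕ) (k : ℕ) {j : ℕ} (hj : j ∈ F) :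
    ∑ S ∈ (F.powerset.filter (fun S => S.card ≤ k)).filter (fun S => j ∈ S),
        p' j * ((∏ i ∈ S.erase j, p i) * ∏ i ∈ F \ S, (1 - p i))
      = p' j * cdfLT p (F.erase j) k := by
  unfold cdfLT
  rw [Finset.mul_sum]
  refine Finset.sum_nbij' (fun S => S.erase j) (fun T => insert j T) ?_ ?_ ?_ ?_ ?_
  · intro S hS
    simp only [Finset.mem_filter, Finset.mem_powerset] at hS ⊢
    obtain ⟨⟨hsub, hcard⟩, hjS⟩ := hS
    refine ⟨Finset.erase_subset_erase j hsub, ?_⟩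
    rw [Finset.card_erase_of_mem hjS]
    have : 1 ≤ S.card := Finset.card_pos.mpr ⟨j, hjS⟩
    omega
  · intro T hT
    simp only [Finset.mem_filter, Finset.mem_powerset] at hT ⊢
    obtain ⟨hsub, hcard⟩ := hT
    have hjT : j ∉ T := fun h => (Finset.mem_erase.mp (hsub h)).1 rfl
    refine ⟨⟨?_, ?_⟩, Finset.mem_insert_self j T⟩
    · intro a ha
      rcases Finset.mem_insert.mp ha with rfl | ha
      · exact hj
      · exact Finset.erase_subset j F (hsub ha)
    · rw [Finset.card_insert_of_notMem hjT]
      omega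
  · intro S hS
    simp only [Finset.mem_filter] at hS
    exact Finset.insert_erase hS.2
  · intro T hT
    simp only [Finset.mem_filter, Finset.mem_powerset] at hT
    have hjT : j ∉ T := fun h => (Finset.mem_erase.mp (hT.1 h)).1 rfl
    exact Finset.erase_insert hjT
  · intro S hS
    simp only [Finset.mem_filter, Finset.mem_powerset] at hS
    obtain ⟨⟨hsub, _⟩, hjS⟩ := hS
    unfold trm
    have hset : F \ S = F.erase j \ S.erase j := by
      ext a
      simp only [Finset.mem_sdiff, Finset.mem_erase]
      constructor
      · rintro ⟨haF, haS⟩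
        have haj : a ≠ j := fun h => haS (h ▸ hjS)
        tauto
      · tauto
    rw [hset]

lemma Yj_eq (p p' : ℕ → ℝ) (F : Finset ℕ) (k : ℕ) (j : ℕ) :
    ∑ S ∈ (F.powerset.filter (fun S => S.card ≤ k)).filter (fun S => j ∉ S),
        p' j * ((∏ i ∈ S, p i) * ∏ i ∈ (F \ S).erase j, (1 - p i))
      = p' j * cdf p (F.erase j) k := by
  unfold cdf
  rw [Finset.mul_sum]
  apply Finset.sum_congr
  · ext S
    simp only [Finset.mem_filter, Finset.mem_powerset, Finset.subset_erase]
    tauto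
  · intro S _
    unfold trm
    have h : (F \ S).erase j = F.erase j \ S := by
      ext a
      simp only [Finset.mem_erase, Finset.mem_sdiff]
      tauto
    rw [h]

/-- The master combinatorial identity for the derivative of the Poisson-binomial CDF. -/
lemma sum_dS (F : Finset ℕ) (p p' : ℕ → ℝ) (k : ℕ) :
    ∑ S ∈ F.powerset.filter (fun S => S.card ≤ k),
      ((∑ j ∈ S, (∏ i ∈ S.erase j, p i) * p' j) * (∏ j ∈ F \ S, (1 - p j))
        + (∏ j ∈ S, p j) * (∑ j ∈ F \ S, (∏ i ∈ (F \ S).erase j, (1 - p i)) * (-(p' j))))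
    = -(∑ j ∈ F, p' j * lay p (F.erase j) k) := by
  have hstep : ∀ S ∈ F.powerset.filter (fun S => S.card ≤ k),
      ((∑ j ∈ S, (∏ i ∈ S.erase j, p i) * p' j) * (∏ j ∈ F \ S, (1 - p j))
        + (∏ j ∈ S, p j) * (∑ j ∈ F \ S, (∏ i ∈ (F \ S).erase j, (1 - p i)) * (-(p' j))))
      = (∑ j ∈ F, if j ∈ S then p' j * ((∏ i ∈ S.erase j, p i) * ∏ i ∈ F \ S, (1 - p i)) else 0)
        - (∑ j ∈ F, if j ∉ S then p' j * ((∏ i ∈ S, p i) * ∏ i ∈ (F \ S).erase j, (1 - p i)) else 0) := by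
    intro S hS
    have hsub : S ⊆ F := Finset.mem_powerset.mp (Finset.mem_filter.mp hS).1
    have e1 : (∑ j ∈ F, if j ∈ S then p' j * ((∏ i ∈ S.erase j, p i) * ∏ i ∈ F \ S, (1 - p i)) else 0)
        = ∑ j ∈ S, p' j * ((∏ i ∈ S.erase j, p i) * ∏ i ∈ F \ S, (1 - p i)) := by
      rw [Finset.sum_ite_mem, Finset.inter_eq_right.mpr hsub]
    have e2 : (∑ j ∈ F, if j ∉ S then p' j * ((∏ i ∈ S, p i) * ∏ i ∈ (F \ S).erase j, (1 - p i)) else 0)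
        = ∑ j ∈ F \ S, p' j * ((∏ i ∈ S, p i) * ∏ i ∈ (F \ S).erase j, (1 - p i)) := by
      rw [← Finset.sum_filter, ← Finset.sdiff_eq_filter]
    have l1 : (∑ j ∈ S, (∏ i ∈ S.erase j, p i) * p' j) * (∏ j ∈ F \ S, (1 - p j))
        = ∑ j ∈ S, p' j * ((∏ i ∈ S.erase j, p i) * ∏ i ∈ F \ S, (1 - p i)) := by
      rw [Finset.sum_mul]; exact Finset.sum_congr rfl fun j _ => by ring
    have l2 : (∏ j ∈ S, p j) * (∑ j ∈ F \ S, (∏ i ∈ (F \ S).erase j, (1 - p i)) * (-(p' j)))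
        = -∑ j ∈ F \ S, p' j * ((∏ i ∈ S, p i) * ∏ i ∈ (F \ S).erase j, (1 - p i)) := by
      rw [Finset.mul_sum, ← Finset.sum_neg_distrib]
      exact Finset.sum_congr rfl fun j _ => by ring
    rw [l1, l2, e1, e2]
    ring
  rw [Finset.sum_congr rfl hstep, Finset.sum_sub_distrib, Finset.sum_comm, Finset.sum_comm
    (s := F.powerset.filter (fun S => S.card ≤ k)) (t := F)]
  have hx : ∀ j ∈ F, (∑ S ∈ F.powerset.filter (fun S => S.card ≤ k),
      if j ∈ S then p' j * ((∏ i ∈ S.erase j, p i) * ∏ i ∈ F \ S, (1 - p i)) else 0)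
      = p' j * cdfLT p (F.erase j) k := by
    intro j hj
    rw [← Finset.sum_filter]
    exact Xj_eq p p' F k hj
  have hy : ∀ j ∈ F, (∑ S ∈ F.powerset.filter (fun S => S.card ≤ k),
      if j ∉ S then p' j * ((∏ i ∈ S, p i) * ∏ i ∈ (F \ S).erase j, (1 - p i)) else 0)
      = p' j * cdf p (F.erase j) k := by
    intro j hj
    rw [← Finset.sum_filter]
    exact Yj_eq p p' F k j
  rw [Finset.sum_congr rfl hx, Finset.sum_congr rfl hy, ← Finset.sum_sub_distrib,
    ← Finset.sum_neg_distrib]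
  refine Finset.sum_congr rfl fun j _ => ?_
  rw [cdf_split]
  ring

lemma hasDerivAt_cdf (F : Finset ℕ) (f : ℕ → ℝ → ℝ) (f' : ℕ → ℝ) (x : ℝ)
    (hf : ∀ j ∈ F, HasDerivAt (f j) (f' j) x) (k : ℕ) :
    HasDerivAt (fun y => cdf (fun j => f j y) F k)
      (-(∑ j ∈ F, f' j * lay (fun i => f i x) (F.erase j) k)) x := by
  have hS : ∀ S ∈ F.powerset.filter (fun S => S.card ≤ k),
      HasDerivAt (fun y => trm (fun j => f j y) F S)
        ((∑ j ∈ S, (∏ i ∈ S.erase j, f i x) * f' j) * (∏ j ∈ F \ S, (1 - f j x))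
          + (∏ j ∈ S, f j x) *
            (∑ j ∈ F \ S, (∏ i ∈ (F \ S).erase j, (1 - f i x)) * (-(f' j)))) x := by
    intro S hSmem
    have hsub : S ⊆ F := Finset.mem_powerset.mp (Finset.mem_filter.mp hSmem).1
    have h1 : HasDerivAt (fun y => ∏ j ∈ S, f j y)
        (∑ j ∈ S, (∏ i ∈ S.erase j, f i x) * f' j) x := by
      have := HasDerivAt.fun_finsetProd (u := S) (f := f) (x := x)
        (f' := fun j => f' j) (fun j hj => hf j (hsub hj))
      simpa [smul_eq_mul] using this
    have h2 : HasDerivAt (fun y => ∏ j ∈ F \ S, (1 - f j y))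
        (∑ j ∈ F \ S, (∏ i ∈ (F \ S).erase j, (1 - f i x)) * (-(f' j))) x := by
      have := HasDerivAt.fun_finsetProd (u := F \ S) (f := fun j y => 1 - f j y) (x := x)
        (f' := fun j => -(f' j))
        (fun j hj => (hf j (Finset.mem_sdiff.mp hj).1).const_sub 1)
      simpa [smul_eq_mul] using this
    exact h1.mul h2
  have hsum := HasDerivAt.fun_sum hS
  rw [sum_dS F (fun j => f j x) f' k] at hsum
  exact hsum


lemma continuousOn_lay (F : Finset ℕ) (f : ℕ → ℝ → ℝ) (s : Set ℝ)
    (hf : ∀ j ∈ F, ContinuousOn (f j) s) (k : ℕ) :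
    ContinuousOn (fun θ => lay (fun j => f j θ) F k) s := by
  unfold lay trm
  apply continuousOn_finset_sum
  intro S hS
  have hsub : S ⊆ F := (Finset.mem_powersetCard.mp hS).1
  apply ContinuousOn.mul
  · exact continuousOn_finset_prod S fun j hj => hf j (hsub hj)
  · exact continuousOn_finset_prod _ fun j hj =>
      continuousOn_const.sub (hf j (Finset.mem_sdiff.mp hj).1)

lemma integrableOn_of_bounded_continuousOn {f : ℝ → ℝ} {a b : ℝ} {C : ℝ}
    (hf : ContinuousOn f (Set.Ioo a b)) (hbd : ∀ x ∈ Set.Ioo a b, |f x| ≤ C) :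
    IntegrableOn f (Set.Ioo a b) := by
  haveI hμ : IsFiniteMeasure (volume.restrict (Set.Ioo a b)) := ⟨by
    rw [Measure.restrict_apply_univ]; exact measure_Ioo_lt_top⟩
  refine ⟨hf.aestronglyMeasurable measurableSet_Ioo, ?_⟩
  apply HasFiniteIntegral.of_bounded (C := C)
  rw [ae_restrict_iff' measurableSet_Ioo]
  exact ae_of_all _ fun x hx => by simpa [Real.norm_eq_abs] using hbd x hx

lemma mvt_lower {f f' : ℝ → ℝ} {lo hi m x y : ℝ} (hlo : 0 < lo) (hhi : hi < 1)
    (hderiv : ∀ θ ∈ Set.Ioo (0:ℝ) 1, HasDerivAt f (f' θ) θ)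
    (hbound : ∀ θ ∈ Set.Icc lo hi, m ≤ f' θ)
    (hx : x ∈ Set.Icc lo hi) (hy : y ∈ Set.Icc lo hi) (hxy : x ≤ y) :
    m * (y - x) ≤ f y - f x := by
  have hsub : Set.Icc lo hi ⊆ Set.Ioo (0:ℝ) 1 := fun θ hθ =>
    ⟨lt_of_lt_of_le hlo hθ.1, lt_of_le_of_lt hθ.2 hhi⟩
  refine Convex.mul_sub_le_image_sub_of_le_deriv (convex_Icc lo hi) ?_ ?_ ?_ x hx y hy hxy
  · intro θ hθ; exact (hderiv θ (hsub hθ)).continuousAt.continuousWithinAt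
  · intro θ hθ
    exact (hderiv θ (hsub (interior_subset hθ))).differentiableAt.differentiableWithinAt
  · intro θ hθ
    rw [(hderiv θ (hsub (interior_subset hθ))).deriv]
    exact hbound θ (interior_subset hθ)


end CTPB

open CTPB

set_option maxHeartbeats 1000000

/-- Lemma 2: under Conditions (D) and (T), for fixed `0 < α < β < 1` there exist constants
`C̃₁, C̃₂ > 0` (independent of `(n,i)`) and `δ₀ > 0` such that for every `δ ∈ (0, δ₀)` and
all sufficiently large `n`, all `1 ≤ i ≤ n`, and every integer `k` admitting
`θ_k ∈ (α,β)` with `∑_{j ≠ i} P_{n,j}(θ_k) = k`, the conditional probability that the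
uniform latent trait lies outside `(δ, 1−δ)` given exactly `k` successes among the
responses other than item `i` is at most `n·δ·exp(−n·C̃₁)/C̃₂`. -/
theorem conditional_tail_prob_bound
    (P P' : ℕ → ℕ → ℝ → ℝ) (κ γ : ℕ → ℕ → ℝ)
    (hP : TriIRF P) (hD : CondD P P') (hT : CondT P κ γ)
    (α β : ℝ) (hα : 0 < α) (hαβ : α < β) (hβ : β < 1) :
    ∃ C₁ C₂ δ₀ : ℝ, 0 < C₁ ∧ 0 < C₂ ∧ 0 < δ₀ ∧
      ∀ δ : ℝ, δ ∈ Set.Ioo 0 δ₀ →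
        ∃ N : ℕ, ∀ n i : ℕ, N ≤ n → 1 ≤ i → i ≤ n →
          ∀ k : ℕ,
            (∃ θk ∈ Set.Ioo α β,
                ∑ j ∈ (Finset.Icc 1 n).erase i, P n j θk = (k : ℝ)) →
            (∫ θ in Set.Ioo (0 : ℝ) δ ∪ Set.Ioo (1 - δ) 1, Qfun P n i k θ) /
                (∫ θ in Set.Ioo (0 : ℝ) 1, Qfun P n i k θ) ≤
              n * δ * Real.exp (-(n * C₁)) / C₂ := by
  classical
  obtain ⟨hD1, hD2⟩ := hD
  obtain ⟨hT1, hT2⟩ := hT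
  obtain ⟨m, M, hm, hmM, hDb⟩ := hD2 (α/4) ((3+β)/4) (by linarith) (by linarith) (by linarith)
  have hM : 0 < M := lt_trans hm hmM
  have hming : 0 < min α (1-β) := lt_min hα (by linarith)
  set c : ℝ := m * min α (1-β) / 4 with hcdef
  have hc : 0 < c := by positivity
  have hexpc : 1 < Real.exp (c/2) := by
    have := Real.add_one_le_exp (c/2); linarith
  set C₀ : ℝ := 3/4 * c * (Real.exp (c/2) - 1) with hC0def
  have hC₀ : 0 < C₀ := by
    have h1 : 0 < Real.exp (c/2) - 1 := by linarith
    rw [hC0def]; positivity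
  obtain ⟨l, u, hl, hu, hlu⟩ := hT2 c hc
  refine ⟨C₀/2, c/(4*M), min l (1-u), by positivity, by positivity,
    lt_min hl.1 (by linarith [hu.2]), ?_⟩
  intro δ hδ
  obtain ⟨hδ0, hδδ₀⟩ := hδ
  have hδl : δ ≤ l := le_trans hδδ₀.le (min_le_left _ _)
  have hδu : δ ≤ 1 - u := le_trans hδδ₀.le (min_le_right _ _)
  have hδ1 : δ < 1 := lt_of_le_of_lt hδl hl.2
  refine ⟨max 2 (⌈Real.log 4 / C₀⌉₊ + 2), ?_⟩
  intro n i hn h1i hin k hk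
  obtain ⟨θk, hθk, hθksum⟩ := hk
  have hn2 : 2 ≤ n := le_trans (le_max_left _ _) hn
  have hnR : (2:ℝ) ≤ (n:ℝ) := by exact_mod_cast hn2
  have hnposR : (0:ℝ) < (n:ℝ) := by linarith
  -- the quantitative largeness of n
  have h4 : Real.exp (-(C₀ * ((n:ℝ)-1))) ≤ 1/4 := by
    have hceil : (⌈Real.log 4 / C₀⌉₊ + 2 : ℕ) ≤ n := le_trans (le_max_right _ _) hn
    have hceilR : (⌈Real.log 4 / C₀⌉₊ : ℝ) + 2 ≤ (n:ℝ) := by exact_mod_cast hceil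
    have h2 := Nat.le_ceil (Real.log 4 / C₀)
    rw [div_le_iff₀ hC₀] at h2
    have h3 := mul_le_mul_of_nonneg_right
      (show (⌈Real.log 4 / C₀⌉₊:ℝ) ≤ (n:ℝ)-1 by linarith) hC₀.le
    have hlog : Real.log 4 ≤ C₀ * ((n:ℝ) - 1) := by linarith
    have h6 : Real.exp (-Real.log 4) = 1/4 := by
      rw [Real.exp_neg, Real.exp_log (by norm_num : (0:ℝ) < 4)]
      norm_num
    calc Real.exp (-(C₀ * ((n:ℝ)-1))) ≤ Real.exp (-Real.log 4) :=
          Real.exp_le_exp.mpr (by linarith)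
      _ = 1/4 := h6
  have hexp2 : Real.exp (-(C₀ * ((n:ℝ)-1))) ≤ Real.exp (-((n:ℝ) * (C₀/2))) := by
    apply Real.exp_le_exp.mpr
    nlinarith [mul_nonneg hC₀.le (show (0:ℝ) ≤ (n:ℝ)/2 - 1 by linarith)]
  set E := (Finset.Icc 1 n).erase i with hEdef
  have hjE : ∀ j ∈ E, 1 ≤ j ∧ j ≤ n := fun j hj =>
    Finset.mem_Icc.mp (Finset.mem_of_mem_erase hj)
  have hiIcc : i ∈ Finset.Icc 1 n := Finset.mem_Icc.mpr ⟨h1i, hin⟩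
  have hcardE : E.card = n - 1 := by
    rw [hEdef, Finset.card_erase_of_mem hiIcc, Nat.card_Icc]
    omega
  have hcardER : (E.card : ℝ) = (n : ℝ) - 1 := by
    rw [hcardE, Nat.cast_sub (by omega), Nat.cast_one]
  have hE1 : 1 ≤ E.card := by omega
  have hE1R : (1:ℝ) ≤ (E.card:ℝ) := by exact_mod_cast hE1
  have hcardnn : (0:ℝ) ≤ (E.card:ℝ) * c := by positivity
  have hQeq : ∀ θ, Qfun P n i k θ = lay (fun j => P n j θ) E k := fun θ => rfl
  have hp01 : ∀ θ ∈ Set.Ioo (0:ℝ) 1, ∀ j ∈ E, 0 ≤ P n j θ ∧ P n j θ ≤ 1 := by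
    intro θ hθ j hj
    have := hP n j (hjE j hj).1 (hjE j hj).2 θ hθ
    exact ⟨this.1, this.2⟩
  have hmvt : ∀ j ∈ E, ∀ x ∈ Set.Icc (α/4) ((3+β)/4), ∀ y ∈ Set.Icc (α/4) ((3+β)/4),
      x ≤ y → m * (y - x) ≤ P n j y - P n j x := by
    intro j hj x hx y hy hxy
    exact mvt_lower (by linarith) (by linarith)
      ((hD1 n j (hjE j hj).1 (hjE j hj).2).1)
      (fun θ hθ => ((hDb n j (hjE j hj).1 (hjE j hj).2 θ hθ).1).le) hx hy hxy
  have hθkIcc : θk ∈ Set.Icc (α/4) ((3+β)/4) :=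
    ⟨by linarith [hθk.1], by linarith [hθk.2]⟩
  -- per-j gap inequalities
  have hgap : ∀ j ∈ E, κ n j + 2*c ≤ P n j θk ∧ P n j θk ≤ γ n j - 2*c := by
    intro j hj
    obtain ⟨hj1, hjn⟩ := hjE j hj
    obtain ⟨hκ0, hκγ, hγ1, hPκγ⟩ := hT1 n j hj1 hjn
    have hκle : κ n j ≤ P n j (α/4) :=
      (hPκγ (α/4) ⟨by linarith, by linarith⟩).1
    have hγge : P n j ((3+β)/4) ≤ γ n j :=
      (hPκγ ((3+β)/4) ⟨by linarith, by linarith⟩).2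
    have h1 := hmvt j hj (α/4) ⟨le_refl _, by linarith⟩ θk hθkIcc (by linarith [hθk.1])
    have h2 := hmvt j hj θk hθkIcc ((3+β)/4) ⟨by linarith, le_refl _⟩ (by linarith [hθk.2])
    constructor
    · have hgle : 2*c ≤ m * (θk - α/4) := by
        have h5 := mul_le_mul_of_nonneg_left (show min α (1-β)/2 ≤ θk - α/4 by
          have := min_le_left α (1-β); linarith [hθk.1]) hm.le
        rw [hcdef]; linarith
      linarith
    · have hgle : 2*c ≤ m * ((3+β)/4 - θk) := by
        have h5 := mul_le_mul_of_nonneg_left (show min α (1-β)/2 ≤ (3+β)/4 - θk by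
          have := min_le_right α (1-β); linarith [hθk.2]) hm.le
        rw [hcdef]; linarith
      linarith
  -- k vs card
  have hkub : (k:ℝ) ≤ (E.card:ℝ) * (1 - 2*c) := by
    calc (k:ℝ) = ∑ j ∈ E, P n j θk := hθksum.symm
      _ ≤ ∑ j ∈ E, (1 - 2*c) := Finset.sum_le_sum (fun j hj => by
          have h1 := (hgap j hj).2
          have hγ1 := (hT1 n j (hjE j hj).1 (hjE j hj).2).2.2.1
          linarith)
      _ = (E.card:ℝ) * (1 - 2*c) := by rw [Finset.sum_const, nsmul_eq_mul]
  have hccard : c ≤ (E.card:ℝ) * c := le_mul_of_one_le_left hc.le hE1R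
  have hkcard : (k:ℝ) ≤ (E.card:ℝ) := by nlinarith [hkub, hcardnn]
  have hklt : k < E.card := by
    have hlt : (k:ℝ) < (E.card:ℝ) := by nlinarith [hkub, hccard]
    exact_mod_cast hlt
  have hcastsub : ((E.card - k : ℕ) : ℝ) = (E.card:ℝ) - (k:ℝ) := by
    rw [Nat.cast_sub hklt.le]
  -- sums at the two interior points
  have hμa : ∑ j ∈ E, P n j (α/2) ≤ (k:ℝ) - (E.card:ℝ) * (2*c) := by
    calc ∑ j ∈ E, P n j (α/2)
        ≤ ∑ j ∈ E, (P n j θk - 2*c) := Finset.sum_le_sum (fun j hj => by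
          have h1 := hmvt j hj (α/2) ⟨by linarith, by linarith⟩ θk hθkIcc (by linarith [hθk.1])
          have hgle : 2*c ≤ m * (θk - α/2) := by
            have h5 := mul_le_mul_of_nonneg_left (show min α (1-β)/2 ≤ θk - α/2 by
              have := min_le_left α (1-β); linarith [hθk.1]) hm.le
            rw [hcdef]; linarith
          linarith)
      _ = (k:ℝ) - (E.card:ℝ) * (2*c) := by
          rw [Finset.sum_sub_distrib, hθksum, Finset.sum_const, nsmul_eq_mul]
  have hμb : (k:ℝ) + (E.card:ℝ) * (2*c) ≤ ∑ j ∈ E, P n j ((1+β)/2) := by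
    have := Finset.sum_le_sum (f := fun j => P n j θk + 2*c) (g := fun j => P n j ((1+β)/2))
      (s := E) (fun j hj => by
        have h1 := hmvt j hj θk hθkIcc ((1+β)/2) ⟨by linarith, by linarith⟩ (by linarith [hθk.2])
        have hgle : 2*c ≤ m * ((1+β)/2 - θk) := by
          have h5 := mul_le_mul_of_nonneg_left (show min α (1-β)/2 ≤ (1+β)/2 - θk by
            have := min_le_right α (1-β); linarith [hθk.2]) hm.le
          rw [hcdef]; linarith
        linarith)
    calc (k:ℝ) + (E.card:ℝ) * (2*c)
        = ∑ j ∈ E, (P n j θk + 2*c) := by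
          rw [Finset.sum_add_distrib, hθksum, Finset.sum_const, nsmul_eq_mul]
      _ ≤ ∑ j ∈ E, P n j ((1+β)/2) := this
  -- tail sums
  have hμδlow : ∀ θ ∈ Set.Ioo (0:ℝ) δ, ∑ j ∈ E, P n j θ ≤ (k:ℝ) - (E.card:ℝ) * c := by
    intro θ hθ
    calc ∑ j ∈ E, P n j θ
        ≤ ∑ j ∈ E, (P n j θk - c) := Finset.sum_le_sum (fun j hj => by
          have h1 := ((hlu n j (hjE j hj).1 (hjE j hj).2).1) θ ⟨hθ.1, le_trans hθ.2.le hδl⟩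
          have h2 := (hgap j hj).1
          linarith)
      _ = (k:ℝ) - (E.card:ℝ) * c := by
          rw [Finset.sum_sub_distrib, hθksum, Finset.sum_const, nsmul_eq_mul]
  have hμδhigh : ∀ θ ∈ Set.Ioo (1-δ) (1:ℝ),
      ∑ j ∈ E, (1 - P n j θ) ≤ ((E.card:ℝ) - (k:ℝ)) - (E.card:ℝ) * c := by
    intro θ hθ
    calc ∑ j ∈ E, (1 - P n j θ)
        ≤ ∑ j ∈ E, (1 - P n j θk - c) := Finset.sum_le_sum (fun j hj => by
          have h1 := ((hlu n j (hjE j hj).1 (hjE j hj).2).2) θ ⟨by linarith [hθ.1], hθ.2⟩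
          have h2 := (hgap j hj).2
          linarith)
      _ = ((E.card:ℝ) - (k:ℝ)) - (E.card:ℝ) * c := by
          rw [show (fun j => 1 - P n j θk - c) = (fun j => (1:ℝ) - (P n j θk + c)) by
            funext j; ring]
          rw [Finset.sum_sub_distrib, Finset.sum_add_distrib, hθksum,
            Finset.sum_const, Finset.sum_const, nsmul_eq_mul, nsmul_eq_mul]
          ring
  -- unified exponent rewriting
  have hexpEq : Real.exp (-(3/4) * c * (Real.exp (c/2) - 1) * (E.card:ℝ))
      = Real.exp (-(C₀ * ((n:ℝ)-1))) := by
    rw [hcardER, hC0def]; ring_nf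
  -- pointwise tail bounds on Q
  have hQδ : ∀ θ ∈ Set.Ioo (0:ℝ) δ, Qfun P n i k θ ≤ Real.exp (-(C₀ * ((n:ℝ)-1))) := by
    intro θ hθ
    have hθ01 : θ ∈ Set.Ioo (0:ℝ) 1 := ⟨hθ.1, lt_trans hθ.2 hδ1⟩
    have happ := cher E (fun j => P n j θ) (fun j hj => hp01 θ hθ01 j hj)
      k hkcard c hc (hμδlow θ hθ)
      (E.powersetCard k)
      (fun S hS => Finset.mem_powerset.mpr (Finset.mem_powersetCard.mp hS).1)
      (fun S hS => ((Finset.mem_powersetCard.mp hS).2).ge)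
    rw [hQeq θ]
    exact le_trans happ (le_of_eq hexpEq)
  have hQδ' : ∀ θ ∈ Set.Ioo (1-δ) (1:ℝ), Qfun P n i k θ ≤ Real.exp (-(C₀ * ((n:ℝ)-1))) := by
    intro θ hθ
    have hθ01 : θ ∈ Set.Ioo (0:ℝ) 1 := ⟨by linarith [hθ.1], hθ.2⟩
    have happ := cher E (fun j => 1 - P n j θ)
      (fun j hj => by
        have h7 := hp01 θ hθ01 j hj
        constructor
        · show (0:ℝ) ≤ 1 - P n j θ
          linarith [h7.2]
        · show 1 - P n j θ ≤ 1
          linarith [h7.1])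
      (E.card - k)
      (by rw [hcastsub]; have hk0 : (0:ℝ) ≤ (k:ℝ) := Nat.cast_nonneg k; linarith)
      c hc
      (by rw [hcastsub]; exact hμδhigh θ hθ)
      (E.powersetCard (E.card - k))
      (fun S hS => Finset.mem_powerset.mpr (Finset.mem_powersetCard.mp hS).1)
      (fun S hS => ((Finset.mem_powersetCard.mp hS).2).ge)
    rw [hQeq θ, lay_compl _ _ _ hklt.le]
    exact le_trans happ (le_of_eq hexpEq)
  -- continuity and integrability of Q
  have hPcont : ∀ j ∈ E, ContinuousOn (P n j) (Set.Ioo (0:ℝ) 1) := by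
    intro j hj θ hθ
    exact ((hD1 n j (hjE j hj).1 (hjE j hj).2).1 θ hθ).continuousAt.continuousWithinAt
  have hQcont : ContinuousOn (Qfun P n i k) (Set.Ioo (0:ℝ) 1) :=
    (continuousOn_lay E (fun j => P n j) (Set.Ioo 0 1) hPcont k).congr (fun θ _ => hQeq θ)
  have hQ01 : ∀ θ ∈ Set.Ioo (0:ℝ) 1, 0 ≤ Qfun P n i k θ ∧ Qfun P n i k θ ≤ 1 := by
    intro θ hθ
    rw [hQeq θ]
    exact ⟨lay_nonneg (hp01 θ hθ) k, lay_le_one (hp01 θ hθ) k⟩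
  have hQint : IntegrableOn (Qfun P n i k) (Set.Ioo (0:ℝ) 1) :=
    integrableOn_of_bounded_continuousOn hQcont
      (fun x hx => abs_le.mpr ⟨by linarith [(hQ01 x hx).1], (hQ01 x hx).2⟩)
  set s : Set ℝ := Set.Ioo (0:ℝ) δ ∪ Set.Ioo (1-δ) 1 with hsdef
  have hsmeas : MeasurableSet s := measurableSet_Ioo.union measurableSet_Ioo
  have hssub : s ⊆ Set.Ioo (0:ℝ) 1 := by
    rintro x (hx | hx)
    · exact ⟨hx.1, lt_trans hx.2 hδ1⟩
    · exact ⟨by linarith [hx.1], hx.2⟩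
  have hvols : volume s ≤ ENNReal.ofReal δ + ENNReal.ofReal δ := by
    refine le_trans (measure_union_le _ _) ?_
    rw [Real.volume_Ioo, Real.volume_Ioo]
    gcongr
    · linarith
    · linarith
  have hvolfin : volume s < ⊤ :=
    lt_of_le_of_lt hvols (ENNReal.add_lt_top.mpr ⟨ENNReal.ofReal_lt_top, ENNReal.ofReal_lt_top⟩)
  have htoReal : (volume s).toReal ≤ 2*δ := by
    have h1 := ENNReal.toReal_mono
      (ENNReal.add_ne_top.mpr ⟨ENNReal.ofReal_ne_top, ENNReal.ofReal_ne_top⟩) hvols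
    rw [ENNReal.toReal_add ENNReal.ofReal_ne_top ENNReal.ofReal_ne_top,
      ENNReal.toReal_ofReal hδ0.le] at h1
    linarith
  have hnum_nn : 0 ≤ ∫ θ in s, Qfun P n i k θ :=
    setIntegral_nonneg hsmeas (fun x hx => (hQ01 x (hssub hx)).1)
  have hnum : (∫ θ in s, Qfun P n i k θ) ≤ 2*δ * Real.exp (-((n:ℝ) * (C₀/2))) := by
    have hb := norm_setIntegral_le_of_norm_le_const (μ := volume) (s := s)
      (f := Qfun P n i k) (C := Real.exp (-(C₀ * ((n:ℝ)-1)))) hvolfin ?_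
    · have h1 : (∫ θ in s, Qfun P n i k θ) ≤ Real.exp (-(C₀*((n:ℝ)-1))) * (volume s).toReal :=
        le_trans (le_abs_self _) (by simpa [Real.norm_eq_abs, measureReal_def] using hb)
      calc (∫ θ in s, Qfun P n i k θ)
          ≤ Real.exp (-(C₀*((n:ℝ)-1))) * (volume s).toReal := h1
        _ ≤ Real.exp (-((n:ℝ)*(C₀/2))) * (2*δ) :=
            mul_le_mul hexp2 htoReal ENNReal.toReal_nonneg (Real.exp_pos _).le
        _ = 2*δ * Real.exp (-((n:ℝ)*(C₀/2))) := by ring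
    · intro x hx
      rw [Real.norm_eq_abs, abs_of_nonneg (hQ01 x (hssub hx)).1]
      rcases hx with hx | hx
      · exact hQδ x hx
      · exact hQδ' x hx
  -- denominator lower bound
  have hab : α/2 ≤ (1+β)/2 := by linarith
  have habsub : Set.Icc (α/2) ((1+β)/2) ⊆ Set.Ioo (0:ℝ) 1 := fun x hx =>
    ⟨by linarith [hx.1], by linarith [hx.2]⟩
  have haIoo : (α/2) ∈ Set.Ioo (0:ℝ) 1 := ⟨by linarith, by linarith⟩
  have hbIoo : ((1+β)/2) ∈ Set.Ioo (0:ℝ) 1 := ⟨by linarith, by linarith⟩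
  set Gd : ℝ → ℝ := fun θ => -(∑ j ∈ E, P' n j θ * lay (fun i' => P n i' θ) (E.erase j) k)
    with hGddef
  have hGderiv : ∀ θ ∈ Set.Ioo (0:ℝ) 1,
      HasDerivAt (fun y => cdf (fun j => P n j y) E k) (Gd θ) θ := by
    intro θ hθ
    exact hasDerivAt_cdf E (fun j => P n j) (fun j => P' n j θ) θ
      (fun j hj => (hD1 n j (hjE j hj).1 (hjE j hj).2).1 θ hθ) k
  have hGdcont : ContinuousOn Gd (Set.Icc (α/2) ((1+β)/2)) := by
    apply ContinuousOn.neg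
    apply continuousOn_finset_sum
    intro j hj
    apply ContinuousOn.mul
    · exact ((hD1 n j (hjE j hj).1 (hjE j hj).2).2).mono habsub
    · exact continuousOn_lay (E.erase j) (fun j' => P n j') (Set.Icc (α/2) ((1+β)/2))
        (fun j' hj' => (hPcont j' (Finset.mem_of_mem_erase hj')).mono habsub) k
  have hGdQ : ∀ θ ∈ Set.Icc (α/2) ((1+β)/2),
      -Gd θ ≤ ((E.card:ℝ) * M / c) * Qfun P n i k θ := by
    intro θ hθ
    have hθ01 := habsub hθ
    have hθIcc4 : θ ∈ Set.Icc (α/4) ((3+β)/4) := ⟨by linarith [hθ.1], by linarith [hθ.2]⟩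
    have hterm : ∀ j ∈ E, P' n j θ * lay (fun i' => P n i' θ) (E.erase j) k
        ≤ M * (lay (fun i' => P n i' θ) E k / c) := by
      intro j hj
      have hlaynn : 0 ≤ lay (fun i' => P n i' θ) (E.erase j) k :=
        lay_nonneg (fun j' hj' => hp01 θ hθ01 j' (Finset.mem_of_mem_erase hj')) k
      have hP'M : P' n j θ ≤ M := ((hDb n j (hjE j hj).1 (hjE j hj).2 θ hθIcc4).2).le
      have hub : P n j θ ≤ 1 - c := by
        have h2 := hmvt j hj θ hθIcc4 ((3+β)/4) ⟨by linarith, le_refl _⟩ (by linarith [hθ.2])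
        have hP1 : P n j ((3+β)/4) ≤ 1 :=
          (hp01 ((3+β)/4) ⟨by linarith, by linarith⟩ j hj).2
        have hc6 : c ≤ m * ((3+β)/4 - θ) := by
          have h5 := mul_le_mul_of_nonneg_left (show min α (1-β)/4 ≤ (3+β)/4 - θ by
            have := min_le_right α (1-β); linarith [hθ.2]) hm.le
          rw [hcdef]; linarith
        linarith
      have hkey := lay_erase_le (fun j' hj' => hp01 θ hθ01 j' hj') hj k
      have hlayle : lay (fun i' => P n i' θ) (E.erase j) k
          ≤ lay (fun i' => P n i' θ) E k / c := by
        rw [le_div_iff₀ hc]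
        calc lay (fun i' => P n i' θ) (E.erase j) k * c
            ≤ lay (fun i' => P n i' θ) (E.erase j) k * (1 - P n j θ) :=
              mul_le_mul_of_nonneg_left (by linarith) hlaynn
          _ = (1 - P n j θ) * lay (fun i' => P n i' θ) (E.erase j) k := mul_comm _ _
          _ ≤ lay (fun i' => P n i' θ) E k := hkey
      calc P' n j θ * lay (fun i' => P n i' θ) (E.erase j) k
          ≤ M * lay (fun i' => P n i' θ) (E.erase j) k :=
            mul_le_mul_of_nonneg_right hP'M hlaynn
        _ ≤ M * (lay (fun i' => P n i' θ) E k / c) :=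
            mul_le_mul_of_nonneg_left hlayle hM.le
    calc -Gd θ = ∑ j ∈ E, P' n j θ * lay (fun i' => P n i' θ) (E.erase j) k := by
          simp only [hGddef, neg_neg]
      _ ≤ ∑ j ∈ E, M * (lay (fun i' => P n i' θ) E k / c) := Finset.sum_le_sum hterm
      _ = (E.card:ℝ) * (M * (lay (fun i' => P n i' θ) E k / c)) := by
          rw [Finset.sum_const, nsmul_eq_mul]
      _ = ((E.card:ℝ) * M / c) * Qfun P n i k θ := by rw [hQeq θ]; ring
  have hGint : IntervalIntegrable Gd volume (α/2) ((1+β)/2) :=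
    (Set.uIcc_of_le hab ▸ hGdcont).intervalIntegrable
  have hFTC : ∫ y in (α/2)..((1+β)/2), Gd y
      = cdf (fun j => P n j ((1+β)/2)) E k - cdf (fun j => P n j (α/2)) E k :=
    intervalIntegral.integral_eq_sub_of_hasDerivAt
      (fun x hx => hGderiv x (habsub (by rwa [Set.uIcc_of_le hab] at hx))) hGint
  have hGa : 3/4 ≤ cdf (fun j => P n j (α/2)) E k := by
    have hpart := cdf_partition (fun j => P n j (α/2)) E k
    have htail := cher E (fun j => P n j (α/2)) (hp01 _ haIoo)
      (k+1) (by exact_mod_cast Nat.succ_le_of_lt hklt) c hc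
      (by push_cast; linarith [hμa, hcardnn])
      (E.powerset.filter (fun S => ¬ S.card ≤ k)) (Finset.filter_subset _ _)
      (fun S hS => by have := (Finset.mem_filter.mp hS).2; omega)
    rw [hexpEq] at htail
    linarith [h4, htail, hpart]
  have hGb : cdf (fun j => P n j ((1+β)/2)) E k ≤ 1/4 := by
    have hcompl := cdf_compl (fun j => P n j ((1+β)/2)) E k
    have hsub1 : ∑ j ∈ E, (1 - P n j ((1+β)/2))
        = (E.card:ℝ) - ∑ j ∈ E, P n j ((1+β)/2) := by
      rw [Finset.sum_sub_distrib, Finset.sum_const, nsmul_eq_mul, mul_one]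
    have htail := cher E (fun j => 1 - P n j ((1+β)/2))
      (fun j hj => by
        have h7 := hp01 _ hbIoo j hj
        constructor
        · show (0:ℝ) ≤ 1 - P n j ((1+β)/2)
          linarith [h7.2]
        · show 1 - P n j ((1+β)/2) ≤ 1
          linarith [h7.1])
      (E.card - k)
      (by rw [hcastsub]; have hk0 : (0:ℝ) ≤ (k:ℝ) := Nat.cast_nonneg k; linarith)
      c hc
      (by rw [hcastsub, hsub1]; linarith [hμb, hcardnn])
      (E.powerset.filter (fun S => E.card - k ≤ S.card)) (Finset.filter_subset _ _)
      (fun S hS => (Finset.mem_filter.mp hS).2)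
    rw [hexpEq] at htail
    rw [hcompl]
    linarith [h4, htail]
  have hQab_int : IntervalIntegrable (Qfun P n i k) volume (α/2) ((1+β)/2) :=
    (Set.uIcc_of_le hab ▸ (hQcont.mono habsub)).intervalIntegrable
  have hmono := intervalIntegral.integral_mono_on hab hGint.neg
    (hQab_int.const_mul ((E.card:ℝ) * M / c)) hGdQ
  have hlhs : (∫ y in (α/2)..((1+β)/2), -Gd y)
      = cdf (fun j => P n j (α/2)) E k - cdf (fun j => P n j ((1+β)/2)) E k := by
    rw [intervalIntegral.integral_neg, hFTC]; ring
  have hrhs : (∫ y in (α/2)..((1+β)/2), ((E.card:ℝ) * M / c) * Qfun P n i k y)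
      = ((E.card:ℝ) * M / c) * ∫ y in (α/2)..((1+β)/2), Qfun P n i k y :=
    intervalIntegral.integral_const_mul _ _
  have hIab : 1/2 ≤ ((E.card:ℝ) * M / c) * ∫ y in (α/2)..((1+β)/2), Qfun P n i k y := by
    rw [← hrhs]
    calc (1:ℝ)/2
        ≤ cdf (fun j => P n j (α/2)) E k - cdf (fun j => P n j ((1+β)/2)) E k := by linarith
      _ = ∫ y in (α/2)..((1+β)/2), -Gd y := hlhs.symm
      _ ≤ _ := hmono
  have hIab_nn : 0 ≤ ∫ y in (α/2)..((1+β)/2), Qfun P n i k y := by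
    rw [intervalIntegral.integral_of_le hab]
    exact setIntegral_nonneg measurableSet_Ioc
      (fun x hx => (hQ01 x ⟨by linarith [hx.1], by linarith [hx.2]⟩).1)
  have hIab_den : (∫ y in (α/2)..((1+β)/2), Qfun P n i k y)
      ≤ ∫ θ in Set.Ioo (0:ℝ) 1, Qfun P n i k θ := by
    rw [intervalIntegral.integral_of_le hab]
    refine setIntegral_mono_set hQint ?_ ?_
    · exact (ae_restrict_iff' measurableSet_Ioo).mpr
        (ae_of_all _ fun x hx => (hQ01 x hx).1)
    · exact HasSubset.Subset.eventuallyLE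
        (fun x hx => ⟨by linarith [hx.1], by linarith [hx.2]⟩)
  have hcard_le_n : (E.card:ℝ) ≤ (n:ℝ) := by rw [hcardER]; linarith
  have hfrac : (E.card:ℝ)*M/c ≤ (n:ℝ)*M/c := by gcongr
  have h13 : ((E.card:ℝ) * M / c) * (∫ y in (α/2)..((1+β)/2), Qfun P n i k y)
      ≤ ((n:ℝ) * M / c) * ∫ θ in Set.Ioo (0:ℝ) 1, Qfun P n i k θ :=
    mul_le_mul hfrac hIab_den hIab_nn (by positivity)
  have h14 : 1/2 ≤ ((n:ℝ)*M/c) * ∫ θ in Set.Ioo (0:ℝ) 1, Qfun P n i k θ :=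
    le_trans hIab h13
  have hden : c/(2*(n:ℝ)*M) ≤ ∫ θ in Set.Ioo (0:ℝ) 1, Qfun P n i k θ := by
    rw [div_le_iff₀ (by positivity)]
    have h15 := mul_le_mul_of_nonneg_left h14 hc.le
    have h16 : c * (((n:ℝ)*M/c) * ∫ θ in Set.Ioo (0:ℝ) 1, Qfun P n i k θ)
        = (n:ℝ)*M*∫ θ in Set.Ioo (0:ℝ) 1, Qfun P n i k θ := by
      rw [← mul_assoc, mul_div_assoc', mul_comm c ((n:ℝ)*M), mul_div_assoc,
        div_self (ne_of_gt hc), mul_one]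
    linarith [h15, h16]
  have hdpos : (0:ℝ) < c/(2*(n:ℝ)*M) := by positivity
  calc (∫ θ in s, Qfun P n i k θ) / (∫ θ in Set.Ioo (0:ℝ) 1, Qfun P n i k θ)
      ≤ (∫ θ in s, Qfun P n i k θ) / (c/(2*(n:ℝ)*M)) :=
        div_le_div_of_nonneg_left hnum_nn hdpos hden
    _ ≤ (2*δ * Real.exp (-((n:ℝ) * (C₀/2)))) / (c/(2*(n:ℝ)*M)) :=
        div_le_div_of_nonneg_right hnum hdpos.le
    _ = (n:ℝ) * δ * Real.exp (-((n:ℝ) * (C₀/2))) / (c/(4*M)) := by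
        rw [div_div_eq_mul_div, div_div_eq_mul_div]
        field_simp
        ring
end

section
/- Let a, b be real parameters with a² > 1. Then for the transformed normal-ogive item response function P_{a,b}, one has lim_{θ↓0} P'_{a,b}(θ) = 0 and lim_{θ↑1} P'_{a,b}(θ) = 0. -/
open Set Filter Topology MeasureTheory

/-- The standard normal density `φ(x) = (2π)^{-1/2} exp(-x²/2)`. -/
noncomputable def stdNormalPDF (x : ℝ) : ℝ :=
  (Real.sqrt (2 * Real.pi))⁻¹ * Real.exp (-(x ^ 2) / 2)

/-- The standard normal CDF `Φ(x) = ∫_{-∞}^x φ`. -/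
noncomputable def stdNormalCDF (x : ℝ) : ℝ :=
  ∫ t in Set.Iic x, stdNormalPDF t

/-- The inverse `Φ⁻¹ : (0,1) → ℝ` of the standard normal CDF. -/
noncomputable def stdNormalCDFInv : ℝ → ℝ :=
  Function.invFun stdNormalCDF

/-- The transformed normal-ogive item response function
`P_{a,b}(θ) = Φ(a(Φ⁻¹(θ) − b))`. -/
noncomputable def ogiveIRF (a b θ : ℝ) : ℝ :=
  stdNormalCDF (a * (stdNormalCDFInv θ - b))

/-- The derivative of the transformed normal-ogive item response function,
`P'_{a,b}(θ) = a·φ(a(Φ⁻¹(θ) − b))/φ(Φ⁻¹(θ))`. -/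
noncomputable def ogiveIRFDeriv (a b θ : ℝ) : ℝ :=
  a * stdNormalPDF (a * (stdNormalCDFInv θ - b)) / stdNormalPDF (stdNormalCDFInv θ)

lemma stdNormalPDF_pos (x : ℝ) : 0 < stdNormalPDF x := by
  unfold stdNormalPDF
  have := Real.pi_pos
  positivity

lemma stdNormalPDF_eq (x : ℝ) : stdNormalPDF x
    = (Real.sqrt (2 * Real.pi))⁻¹ * Real.exp (-(1/2) * x ^ 2) := by
  unfold stdNormalPDF; ring_nf

lemma stdNormalPDF_integrable : Integrable stdNormalPDF := by
  have : Integrable fun x : ℝ => Real.exp (-(1/2) * x ^ 2) :=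
    integrable_exp_neg_mul_sq (by norm_num)
  have h := this.const_mul (Real.sqrt (2 * Real.pi))⁻¹
  refine h.congr (Eventually.of_forall fun x => ?_)
  rw [stdNormalPDF_eq]

lemma stdNormalPDF_integral : ∫ x : ℝ, stdNormalPDF x = 1 := by
  simp only [stdNormalPDF_eq]
  rw [MeasureTheory.integral_const_mul, integral_gaussian]
  have h2 : Real.pi / (1/2) = 2 * Real.pi := by ring
  rw [h2, inv_mul_cancel₀]
  have := Real.pi_pos
  positivity

lemma stdNormalCDF_strictMono : StrictMono stdNormalCDF := by
  intro x y hxy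
  have h : stdNormalCDF y - stdNormalCDF x = ∫ t in x..y, stdNormalPDF t :=
    intervalIntegral.integral_Iic_sub_Iic stdNormalPDF_integrable.integrableOn
      stdNormalPDF_integrable.integrableOn
  have hpos : 0 < ∫ t in x..y, stdNormalPDF t :=
    intervalIntegral.intervalIntegral_pos_of_pos
      (stdNormalPDF_integrable.intervalIntegrable) (fun t => stdNormalPDF_pos t) hxy
  linarith

lemma stdNormalCDF_tendsto_atTop : Tendsto stdNormalCDF atTop (𝓝 1) := by
  have h := tendsto_setIntegral_of_monotone (μ := volume) (f := stdNormalPDF)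
    (s := fun x : ℝ => Iic x) (fun x => measurableSet_Iic)
    (fun x y hxy => Iic_subset_Iic.2 hxy)
    (by rw [iUnion_Iic]; exact stdNormalPDF_integrable.integrableOn)
  rw [iUnion_Iic, Measure.restrict_univ, stdNormalPDF_integral] at h
  exact h

lemma stdNormalCDF_tendsto_atBot : Tendsto stdNormalCDF atBot (𝓝 0) := by
  have h := tendsto_setIntegral_of_antitone (μ := volume) (f := stdNormalPDF)
    (s := fun x : ℝ => Iic (-x)) (fun x => measurableSet_Iic)
    (fun x y hxy => Iic_subset_Iic.2 (by linarith))
    ⟨0, stdNormalPDF_integrable.integrableOn⟩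
  have hempty : ⋂ x : ℝ, Iic (-x) = ∅ := by
    apply eq_empty_iff_forall_notMem.2
    intro t ht
    simp only [mem_iInter, mem_Iic] at ht
    linarith [ht (-(t - 1))]
  rw [hempty] at h
  simp only [Measure.restrict_empty, integral_zero_measure] at h
  have := h.comp tendsto_neg_atBot_atTop
  exact (by simpa [Function.comp_def] using this :
    Tendsto (fun x : ℝ => ∫ t in Iic x, stdNormalPDF t) atBot (𝓝 0))

lemma stdNormalCDF_continuous : Continuous stdNormalCDF := by
  have hcont := stdNormalPDF_integrable.continuous_primitive 0
  have heq : ∀ x, stdNormalCDF x = stdNormalCDF 0 + ∫ t in (0:ℝ)..x, stdNormalPDF t := by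
    intro x
    have := intervalIntegral.integral_Iic_sub_Iic
      (stdNormalPDF_integrable.integrableOn (s := Iic (0:ℝ)))
      (stdNormalPDF_integrable.integrableOn (s := Iic x))
    unfold stdNormalCDF
    linarith
  rw [show stdNormalCDF = fun x => stdNormalCDF 0 + ∫ t in (0:ℝ)..x, stdNormalPDF t
    from funext heq]
  exact continuous_const.add hcont

lemma stdNormalCDF_pos (x : ℝ) : 0 < stdNormalCDF x := by
  have h1 : stdNormalCDF (x - 1) < stdNormalCDF x :=
    stdNormalCDF_strictMono (by linarith)
  have h0 : 0 ≤ stdNormalCDF (x - 1) :=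
    MeasureTheory.setIntegral_nonneg measurableSet_Iic fun t _ => (stdNormalPDF_pos t).le
  linarith

lemma stdNormalCDF_lt_one (x : ℝ) : stdNormalCDF x < 1 := by
  have h1 : stdNormalCDF x < stdNormalCDF (x + 1) :=
    stdNormalCDF_strictMono (by linarith)
  have h2 : stdNormalCDF (x + 1) ≤ 1 :=
    stdNormalCDF_strictMono.monotone.ge_of_tendsto stdNormalCDF_tendsto_atTop (x + 1)
  linarith

lemma stdNormalCDF_surj (θ : ℝ) (h0 : 0 < θ) (h1 : θ < 1) : ∃ x, stdNormalCDF x = θ := by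
  obtain ⟨x, hx⟩ := (stdNormalCDF_tendsto_atBot.eventually (eventually_lt_nhds h0)).exists
  obtain ⟨y, hy⟩ := (stdNormalCDF_tendsto_atTop.eventually (eventually_gt_nhds h1)).exists
  have := intermediate_value_univ x y stdNormalCDF_continuous
    (Set.mem_Icc.2 ⟨hx.le, hy.le⟩)
  exact this

lemma stdNormalCDF_inv_eq (θ : ℝ) (h0 : 0 < θ) (h1 : θ < 1) :
    stdNormalCDF (stdNormalCDFInv θ) = θ :=
  Function.invFun_eq (stdNormalCDF_surj θ h0 h1)

lemma stdNormalCDFInv_tendsto_atBot : Tendsto stdNormalCDFInv (𝓝[>] (0:ℝ)) atBot := by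
  rw [tendsto_atBot]
  intro M
  filter_upwards [Ioo_mem_nhdsGT_of_mem
    (⟨le_refl (0:ℝ), stdNormalCDF_pos M⟩ : (0:ℝ) ∈ Ico (0:ℝ) (stdNormalCDF M))] with θ hθ
  have h := stdNormalCDF_inv_eq θ hθ.1 (hθ.2.trans (stdNormalCDF_lt_one M))
  have : stdNormalCDF (stdNormalCDFInv θ) < stdNormalCDF M := by rw [h]; exact hθ.2
  exact (stdNormalCDF_strictMono.lt_iff_lt.mp this).le

lemma stdNormalCDFInv_tendsto_atTop : Tendsto stdNormalCDFInv (𝓝[<] (1:ℝ)) atTop := by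
  rw [tendsto_atTop]
  intro M
  filter_upwards [Ioo_mem_nhdsLT_of_mem
    (⟨stdNormalCDF_lt_one M, le_refl (1:ℝ)⟩ : (1:ℝ) ∈ Ioc (stdNormalCDF M) 1)] with θ hθ
  have h := stdNormalCDF_inv_eq θ ((stdNormalCDF_pos M).trans hθ.1) hθ.2
  have : stdNormalCDF M < stdNormalCDF (stdNormalCDFInv θ) := by rw [h]; exact hθ.1
  exact (stdNormalCDF_strictMono.lt_iff_lt.mp this).le

lemma stdNormalPDF_div (u v : ℝ) :
    stdNormalPDF u / stdNormalPDF v = Real.exp ((v ^ 2 - u ^ 2) / 2) := by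
  unfold stdNormalPDF
  rw [mul_div_mul_left _ _ (inv_ne_zero (by
    have := Real.pi_pos; positivity : Real.sqrt (2 * Real.pi) ≠ 0)),
    ← Real.exp_sub]
  congr 1
  ring

lemma gauss_ratio_tendsto (a b : ℝ) (h1 : 1 < a ^ 2) {l : Filter ℝ}
    (hl : Tendsto (fun x : ℝ => (x - a ^ 2 * b / (a ^ 2 - 1)) ^ 2) l atTop) :
    Tendsto (fun x : ℝ => a * stdNormalPDF (a * (x - b)) / stdNormalPDF x) l (𝓝 0) := by
  have hc : (0:ℝ) < a ^ 2 - 1 := by linarith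
  set c : ℝ := a ^ 2 - 1 with hcdef
  set d : ℝ := a ^ 2 * b / c with hddef
  have key : ∀ x : ℝ, a * stdNormalPDF (a * (x - b)) / stdNormalPDF x
      = a * Real.exp ((a ^ 4 * b ^ 2 / c - a ^ 2 * b ^ 2) / 2 - c / 2 * (x - d) ^ 2) := by
    intro x
    rw [mul_div_assoc, stdNormalPDF_div]
    congr 2
    have h0 : a ^ 2 - 1 ≠ 0 := by linarith
    rw [hddef, hcdef]
    field_simp
    ring
  simp only [key]
  have hE : Tendsto (fun x : ℝ =>
      (a ^ 4 * b ^ 2 / c - a ^ 2 * b ^ 2) / 2 - c / 2 * (x - d) ^ 2) l atBot := by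
    have h2 : Tendsto (fun x : ℝ => c / 2 * (x - d) ^ 2) l atTop :=
      hl.const_mul_atTop (by linarith)
    have h3 : Tendsto (fun x : ℝ => -(c / 2 * (x - d) ^ 2)) l atBot :=
      tendsto_neg_atTop_atBot.comp h2
    have h4 := tendsto_atBot_add_const_left l
      ((a ^ 4 * b ^ 2 / c - a ^ 2 * b ^ 2) / 2) h3
    exact h4.congr fun x => by ring
  have := (Real.tendsto_exp_atBot.comp hE).const_mul a
  simpa using this

/-- If `a² > 1`, then `P'_{a,b}(θ) → 0` as `θ ↓ 0` and as `θ ↑ 1`. -/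
theorem ogive_deriv_boundary_limits_steep (a b : ℝ) (h1 : 1 < a ^ 2) :
    Tendsto (ogiveIRFDeriv a b) (𝓝[>] (0 : ℝ)) (𝓝 0) ∧
    Tendsto (ogiveIRFDeriv a b) (𝓝[<] (1 : ℝ)) (𝓝 0) := by
  set d : ℝ := a ^ 2 * b / (a ^ 2 - 1)
  have hsq_top : Tendsto (fun x : ℝ => (x - d) ^ 2) atTop atTop := by
    have h := tendsto_atTop_add_const_right atTop (-d) tendsto_id
    exact (tendsto_pow_atTop two_ne_zero).comp h
  have hsq_bot : Tendsto (fun x : ℝ => (x - d) ^ 2) atBot atTop := by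
    have h : Tendsto (fun x : ℝ => d - x) atBot atTop := by
      have hneg : Tendsto (fun x : ℝ => -x) atBot atTop := tendsto_neg_atBot_atTop
      exact tendsto_atTop_add_const_left atBot d hneg
    have h2 := (tendsto_pow_atTop two_ne_zero).comp h
    refine h2.congr fun x => ?_
    simp only [Function.comp_apply]
    ring
  have heq : ogiveIRFDeriv a b =
      (fun x : ℝ => a * stdNormalPDF (a * (x - b)) / stdNormalPDF x) ∘ stdNormalCDFInv :=
    rfl
  constructor
  · rw [heq]
    exact (gauss_ratio_tendsto a b h1 hsq_bot).comp stdNormalCDFInv_tendsto_atBot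
  · rw [heq]
    exact (gauss_ratio_tendsto a b h1 hsq_top).comp stdNormalCDFInv_tendsto_atTop
end
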